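/- Let S = I₁ + I₂ + ... + Iₙ be a sum of independent Bernoulli random variables with P(Iᵢ = 1) = pᵢ, and let Λ be a Poisson random variable with mean p₁ + ... + pₙ. Then the total variation distance between the law of S and the law of Λ, namely (1/2) Σ_{k≥0} |P(S = k) − P(Λ = k)|, is at most Σᵢ pᵢ². -/

import Mathlib

open MeasureTheory ProbabilityTheory Finset

namespace LeCamAux

noncomputable def pois (t : ℝ) (k : ℕ) : ℝ := Real.exp (-t) * t ^ k / k.factorial

noncomputable def bern (p : ℝ) (k : ℕ) : ℝ :=
  if k = 0 then 1 - p else if k = 1 then p else 0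

noncomputable def conv (f g : ℕ → ℝ) (k : ℕ) : ℝ :=
  ∑ j ∈ Finset.range (k + 1), f j * g (k - j)

lemma pois_nonneg {t : ℝ} (ht : 0 ≤ t) (k : ℕ) : 0 ≤ pois t k := by
  unfold pois; positivity

lemma hasSum_pois {t : ℝ} (ht : 0 ≤ t) : HasSum (pois t) 1 := by
  have h := poissonPMFRealSum t.toNNReal
  unfold poissonPMFReal at h
  rw [show pois t = fun k => Real.exp (-t) * t ^ k / k.factorial from rfl]
  simpa [pois, Real.coe_toNNReal t ht] using h

lemma summable_bern (p : ℝ) : Summable (bern p) := by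
  apply summable_of_ne_finset_zero (s := Finset.range 2)
  intro k hk
  simp only [Finset.mem_range, not_lt] at hk
  have h0 : k ≠ 0 := by omega
  have h1 : k ≠ 1 := by omega
  simp [bern, h0, h1]

lemma tsum_bern (p : ℝ) : ∑' k, bern p k = 1 := by
  rw [tsum_eq_sum (s := Finset.range 2)]
  · simp [Finset.sum_range_succ, bern]
  · intro k hk
    simp only [Finset.mem_range, not_lt] at hk
    have h0 : k ≠ 0 := by omega
    have h1 : k ≠ 1 := by omega
    simp [bern, h0, h1]

lemma bern_nonneg {p : ℝ} (hp0 : 0 ≤ p) (hp1 : p ≤ 1) (k : ℕ) : 0 ≤ bern p k := by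
  unfold bern
  split_ifs <;> linarith

lemma conv_comm (f g : ℕ → ℝ) (k : ℕ) : conv f g k = conv g f k := by
  unfold conv
  rw [← Finset.sum_range_reflect]
  apply Finset.sum_congr rfl
  intro j hj
  have hj' : j ≤ k := Nat.lt_succ_iff.mp (Finset.mem_range.mp hj)
  have h1 : k + 1 - 1 - j = k - j := by omega
  rw [h1]
  have h2 : k - (k - j) = j := by omega
  rw [h2, mul_comm]

lemma summable_abs_conv {c h : ℕ → ℝ} (hc0 : ∀ k, 0 ≤ c k) (hc : Summable c)
    (hh : Summable fun k => |h k|) :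
    Summable fun k => |conv c h k| := by
  have hcn : Summable fun k => ‖c k‖ := by
    simpa [Real.norm_eq_abs, abs_of_nonneg (hc0 _)] using hc
  have hhn : Summable fun k => ‖|h k|‖ := by simpa using hh
  have hs : Summable fun n => ∑ j ∈ range (n + 1), c j * |h (n - j)| :=
    (summable_norm_sum_mul_range_of_summable_norm hcn hhn).of_norm
  apply Summable.of_nonneg_of_le (fun k => abs_nonneg _) _ hs
  intro k
  refine (Finset.abs_sum_le_sum_abs _ _).trans ?_
  apply Finset.sum_le_sum
  intro j hj
  rw [abs_mul, abs_of_nonneg (hc0 j)]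

lemma tsum_abs_conv_le {c h : ℕ → ℝ} (hc0 : ∀ k, 0 ≤ c k) (hc : Summable c)
    (hh : Summable fun k => |h k|) :
    ∑' k, |conv c h k| ≤ (∑' k, c k) * (∑' k, |h k|) := by
  have hcn : Summable fun k => ‖c k‖ := by
    simpa [Real.norm_eq_abs, abs_of_nonneg (hc0 _)] using hc
  have hhn : Summable fun k => ‖|h k|‖ := by simpa using hh
  have hs : Summable fun n => ∑ j ∈ range (n + 1), c j * |h (n - j)| :=
    (summable_norm_sum_mul_range_of_summable_norm hcn hhn).of_norm
  have key := tsum_mul_tsum_eq_tsum_sum_range_of_summable_norm hcn hhn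
  rw [key]
  apply Summable.tsum_le_tsum _ (summable_abs_conv hc0 hc hh) hs
  intro k
  refine (Finset.abs_sum_le_sum_abs _ _).trans ?_
  apply Finset.sum_le_sum
  intro j hj
  rw [abs_mul, abs_of_nonneg (hc0 j)]

lemma conv_pois {t u : ℝ} (k : ℕ) :
    conv (pois t) (pois u) k = pois (t + u) k := by
  unfold conv pois
  rw [neg_add, Real.exp_add, add_pow]
  rw [Finset.mul_sum, Finset.sum_div]
  apply Finset.sum_congr rfl
  intro j hj
  have hj' : j ≤ k := Nat.lt_succ_iff.mp (Finset.mem_range.mp hj)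
  have hfac := Nat.choose_mul_factorial_mul_factorial hj'
  have h1 : (j.factorial : ℝ) ≠ 0 := Nat.cast_ne_zero.mpr j.factorial_ne_zero
  have h2 : ((k - j).factorial : ℝ) ≠ 0 := Nat.cast_ne_zero.mpr (k - j).factorial_ne_zero
  have h3 : (k.factorial : ℝ) ≠ 0 := Nat.cast_ne_zero.mpr k.factorial_ne_zero
  have hfacR : (k.choose j : ℝ) * j.factorial * (k - j).factorial = k.factorial := by
    exact_mod_cast congrArg Nat.cast hfac
  field_simp
  rw [← hfacR]
  ring

lemma summable_abs_bern_sub_pois {p : ℝ} (hp0 : 0 ≤ p) :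
    Summable fun k => |bern p k - pois p k| := by
  have h1 : Summable fun k => |bern p k| + |pois p k| :=
    ((summable_bern p).abs).add ((hasSum_pois hp0).summable.abs)
  exact Summable.of_nonneg_of_le (fun k => abs_nonneg _) (fun k => abs_sub _ _) h1

lemma tsum_abs_bern_sub_pois {p : ℝ} (hp0 : 0 ≤ p) :
    ∑' k, |bern p k - pois p k| ≤ 2 * p ^ 2 := by
  have hS := summable_abs_bern_sub_pois hp0
  have hSp := (hasSum_pois hp0).summable
  have he1 : 1 - p ≤ Real.exp (-p) := by
    have := Real.add_one_le_exp (-p); linarith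
  have he2 : Real.exp (-p) ≤ 1 := Real.exp_le_one_iff.mpr (by linarith)
  have hS1 : Summable fun n => |bern p (n + 1) - pois p (n + 1)| := by
    have := (summable_nat_add_iff (f := fun k => |bern p k - pois p k|) 1).mpr hS
    simpa using this
  rw [Summable.tsum_eq_zero_add hS, Summable.tsum_eq_zero_add hS1]
  have hb0 : bern p 0 = 1 - p := by simp [bern]
  have hb1 : bern p 1 = p := by simp [bern]
  have hp0' : pois p 0 = Real.exp (-p) := by simp [pois]
  have hp1' : pois p 1 = Real.exp (-p) * p := by simp [pois]
  have htail : ∑' n, |bern p (n + 1 + 1) - pois p (n + 1 + 1)| = ∑' n, pois p (n + 2) := by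
    apply tsum_congr
    intro n
    have : bern p (n + 1 + 1) = 0 := by simp [bern]
    rw [this, zero_sub, abs_neg, abs_of_nonneg (pois_nonneg hp0 _)]
  rw [htail]
  have hsum2 : ∑' n, pois p (n + 2) = 1 - pois p 0 - pois p 1 := by
    have h1 := Summable.tsum_eq_zero_add hSp
    have hSp1 : Summable fun n => pois p (n + 1) := by
      have := (summable_nat_add_iff (f := pois p) 1).mpr hSp
      simpa using this
    have h2 := Summable.tsum_eq_zero_add hSp1
    rw [(hasSum_pois hp0).tsum_eq] at h1
    have : ∑' n, pois p (n + 1 + 1) = ∑' n, pois p (n + 2) := by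
      apply tsum_congr; intro n; norm_num
    rw [this] at h2
    linarith
  rw [hsum2, hb0, hb1, hp0', hp1']
  rw [abs_of_nonpos (by linarith), abs_of_nonneg (by nlinarith)]
  nlinarith

lemma conv_bern_succ (f : ℕ → ℝ) (q : ℝ) (m : ℕ) :
    conv f (bern q) (m + 1) = f (m + 1) * (1 - q) + f m * q := by
  unfold conv
  rw [Finset.sum_range_succ, Finset.sum_range_succ]
  have h0 : m + 1 - (m + 1) = 0 := by omega
  have h1 : m + 1 - m = 1 := by omega
  rw [h0, h1]
  have hz : ∑ j ∈ Finset.range m, f j * bern q (m + 1 - j) = 0 := by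
    apply Finset.sum_eq_zero
    intro j hj
    have hj' : j < m := Finset.mem_range.mp hj
    have h2 : m + 1 - j ≠ 0 := by omega
    have h3 : m + 1 - j ≠ 1 := by omega
    simp [bern, h2, h3]
  rw [hz]
  simp [bern]
  ring

lemma conv_bern_zero (f : ℕ → ℝ) (q : ℝ) :
    conv f (bern q) 0 = f 0 * (1 - q) := by
  simp [conv, bern]

lemma conv_sub (f f' g g' : ℕ → ℝ) (k : ℕ) :
    conv f g k - conv f' g' k
      = conv (fun j => f j - f' j) g k + conv f' (fun j => g j - g' j) k := by
  unfold conv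
  rw [← Finset.sum_add_distrib, ← Finset.sum_sub_distrib]
  apply Finset.sum_congr rfl
  intro j hj
  ring

section Prob

variable {Ω : Type*} [MeasurableSpace Ω] (μ : Measure Ω) [IsProbabilityMeasure μ]
  {n : ℕ} (I : Fin n → Ω → ℕ) (p : Fin n → ℝ)

theorem f_insert (hmeas : ∀ i, Measurable (I i)) (hval : ∀ i ω, I i ω ≤ 1)
    (hindep : iIndepFun I μ)
    (hp : ∀ i, (μ {ω | I i ω = 1}).toReal = p i)
    {s : Finset (Fin n)} {i : Fin n} (hi : i ∉ s) (k : ℕ) :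
    (μ {ω | (∑ j ∈ insert i s, I j ω) = k}).toReal
      = conv (fun j => (μ {ω | (∑ l ∈ s, I l ω) = j}).toReal) (bern (p i)) k := by
  set X : Ω → ℕ := fun ω => ∑ j ∈ s, I j ω with hX
  have hXmeas : Measurable X := Finset.measurable_sum s fun j _ => hmeas j
  have hXY : IndepFun X (I i) μ := by
    have h := hindep.indepFun_finsetSum_of_notMem hmeas hi
    have heq : (∑ j ∈ s, I j) = X := by
      funext ω; rw [hX]; exact Finset.sum_apply ω s I
    rwa [heq] at h
  have key : ∀ a b : ℕ, μ (X ⁻¹' {a} ∩ I i ⁻¹' {b}) = μ (X ⁻¹' {a}) * μ (I i ⁻¹' {b}) :=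
    fun a b => hXY.measure_inter_preimage_eq_mul _ _ (measurableSet_singleton a)
      (measurableSet_singleton b)
  have hY1meas : MeasurableSet (I i ⁻¹' {1}) := (hmeas i) (measurableSet_singleton 1)
  have hY0 : (μ (I i ⁻¹' {0})).toReal = 1 - p i := by
    have hcompl : I i ⁻¹' {0} = (I i ⁻¹' {1})ᶜ := by
      ext ω
      have := hval i ω
      simp only [Set.mem_preimage, Set.mem_singleton_iff, Set.mem_compl_iff]
      omega
    rw [hcompl, measure_compl hY1meas (measure_ne_top μ _), measure_univ,
      ENNReal.toReal_sub_of_le prob_le_one ENNReal.one_ne_top, ENNReal.toReal_one]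
    congr 1
    rw [← hp i]
    rfl
  have hsum : ∀ ω, ∑ j ∈ insert i s, I j ω = I i ω + X ω := fun ω => Finset.sum_insert hi
  cases k with
  | zero =>
    have hset : {ω | (∑ j ∈ insert i s, I j ω) = 0} = X ⁻¹' {0} ∩ I i ⁻¹' {0} := by
      ext ω
      simp only [Set.mem_setOf_eq, hsum ω, Set.mem_inter_iff, Set.mem_preimage,
        Set.mem_singleton_iff]
      omega
    rw [hset, key, ENNReal.toReal_mul, conv_bern_zero, hY0]
    rfl
  | succ m =>
    have hset : {ω | (∑ j ∈ insert i s, I j ω) = m + 1}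
        = (X ⁻¹' {m + 1} ∩ I i ⁻¹' {0}) ∪ (X ⁻¹' {m} ∩ I i ⁻¹' {1}) := by
      ext ω
      have := hval i ω
      simp only [Set.mem_setOf_eq, hsum ω, Set.mem_union, Set.mem_inter_iff, Set.mem_preimage,
        Set.mem_singleton_iff]
      omega
    have hdisj : Disjoint (X ⁻¹' {m + 1} ∩ I i ⁻¹' {0}) (X ⁻¹' {m} ∩ I i ⁻¹' {1}) := by
      apply Set.disjoint_left.mpr
      rintro ω ⟨-, h0⟩ ⟨-, h1⟩
      simp only [Set.mem_preimage, Set.mem_singleton_iff] at h0 h1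
      omega
    have hm2 : MeasurableSet (X ⁻¹' {m} ∩ I i ⁻¹' {1}) :=
      (hXmeas (measurableSet_singleton m)).inter hY1meas
    rw [hset, measure_union hdisj hm2, ENNReal.toReal_add (measure_ne_top μ _) (measure_ne_top μ _),
      key, key, ENNReal.toReal_mul, ENNReal.toReal_mul, conv_bern_succ, hY0]
    have h1 : (μ (I i ⁻¹' {1})).toReal = p i := by rw [← hp i]; rfl
    rw [h1]
    rfl

theorem f_summable (hmeas : ∀ i, Measurable (I i)) (hval : ∀ i ω, I i ω ≤ 1)
    (s : Finset (Fin n)) :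
    Summable fun k => (μ {ω | (∑ l ∈ s, I l ω) = k}).toReal := by
  apply summable_of_ne_finset_zero (s := Finset.range (s.card + 1))
  intro k hk
  simp only [Finset.mem_range, not_lt] at hk
  have hempty : {ω | (∑ l ∈ s, I l ω) = k} = ∅ := by
    ext ω
    simp only [Set.mem_setOf_eq, Set.mem_empty_iff_false, iff_false]
    intro h
    have hle : (∑ l ∈ s, I l ω) ≤ s.card := by
      calc (∑ l ∈ s, I l ω) ≤ ∑ l ∈ s, 1 := Finset.sum_le_sum fun l _ => hval l ω
      _ = s.card := by simp
    omega
  simp [hempty]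

theorem f_tsum_le_one (hmeas : ∀ i, Measurable (I i)) (hval : ∀ i ω, I i ω ≤ 1)
    (s : Finset (Fin n)) :
    ∑' k, (μ {ω | (∑ l ∈ s, I l ω) = k}).toReal ≤ 1 := by
  apply Summable.tsum_le_of_sum_le (f_summable μ I hmeas hval s)
  intro K
  set g : Ω → ℕ := fun ω => ∑ l ∈ s, I l ω with hg
  have hgmeas : Measurable g := Finset.measurable_sum s fun j _ => hmeas j
  have hsets : ∀ k : ℕ, MeasurableSet {ω | g ω = k} := fun k =>
    hgmeas (measurableSet_singleton k)
  have hdisj : (K : Set ℕ).PairwiseDisjoint fun k => {ω | g ω = k} := by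
    intro a _ b _ hab
    apply Set.disjoint_left.mpr
    intro ω ha hb
    exact hab (ha.symm.trans hb)
  calc ∑ k ∈ K, (μ {ω | g ω = k}).toReal
      = (∑ k ∈ K, μ {ω | g ω = k}).toReal := by
        rw [ENNReal.toReal_sum fun k _ => measure_ne_top μ _]
    _ = (μ (⋃ k ∈ K, {ω | g ω = k})).toReal := by
        rw [measure_biUnion_finset hdisj fun k _ => hsets k]
    _ ≤ (μ Set.univ).toReal := by
        apply ENNReal.toReal_mono (measure_ne_top μ _)
        exact measure_mono (Set.subset_univ _)
    _ = 1 := by simp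

theorem main_aux (hmeas : ∀ i, Measurable (I i)) (hval : ∀ i ω, I i ω ≤ 1)
    (hindep : iIndepFun I μ)
    (hp : ∀ i, (μ {ω | I i ω = 1}).toReal = p i)
    (s : Finset (Fin n)) :
    ∑' k, |(μ {ω | (∑ i ∈ s, I i ω) = k}).toReal - pois (∑ i ∈ s, p i) k|
      ≤ 2 * ∑ i ∈ s, p i ^ 2 := by
  classical
  have hp0 : ∀ i, 0 ≤ p i := fun i => (hp i) ▸ ENNReal.toReal_nonneg
  have hp1 : ∀ i, p i ≤ 1 := by
    intro i
    rw [← hp i]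
    calc (μ {ω | I i ω = 1}).toReal ≤ (μ Set.univ).toReal :=
      ENNReal.toReal_mono (measure_ne_top μ _) (measure_mono (Set.subset_univ _))
    _ = 1 := by simp
  induction s using Finset.induction_on with
  | empty =>
    have hzero : ∀ k : ℕ,
        |(μ {ω | (∑ i ∈ (∅ : Finset (Fin n)), I i ω) = k}).toReal
          - pois (∑ i ∈ (∅ : Finset (Fin n)), p i) k| = 0 := by
      intro k
      simp only [Finset.sum_empty]
      cases k with
      | zero =>
        have h1 : {ω : Ω | (0 : ℕ) = 0} = Set.univ := by ext ω; simp
        rw [h1]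
        simp [pois]
      | succ m =>
        have h1 : {ω : Ω | (0 : ℕ) = m + 1} = ∅ := by ext ω; simp
        rw [h1]
        simp [pois]
    rw [tsum_congr hzero]
    simp
  | insert i s hi ih =>
    set lam : ℝ := ∑ j ∈ s, p j with hlam
    have hlam0 : 0 ≤ lam := Finset.sum_nonneg fun j _ => hp0 j
    set fs : ℕ → ℝ := fun k => (μ {ω | (∑ l ∈ s, I l ω) = k}).toReal with hfs
    have hfs0 : ∀ k, 0 ≤ fs k := fun k => ENNReal.toReal_nonneg
    have hfsS : Summable fs := f_summable μ I hmeas hval s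
    have hfsle : ∑' k, fs k ≤ 1 := f_tsum_le_one μ I hmeas hval s
    -- difference of target
    have hsum_ins : ∑ j ∈ insert i s, p j = p i + lam := Finset.sum_insert hi
    have habss : Summable fun k => |fs k - pois lam k| := by
      have h1 : Summable fun k => |fs k| + |pois lam k| :=
        (hfsS.abs).add ((hasSum_pois hlam0).summable.abs)
      exact Summable.of_nonneg_of_le (fun k => abs_nonneg _) (fun k => abs_sub _ _) h1
    have habsb : Summable fun k => |bern (p i) k - pois (p i) k| :=
      summable_abs_bern_sub_pois (hp0 i)
    have hdecomp : ∀ k,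
        (μ {ω | (∑ l ∈ insert i s, I l ω) = k}).toReal - pois (∑ j ∈ insert i s, p j) k
          = conv (bern (p i)) (fun j => fs j - pois lam j) k
            + conv (pois lam) (fun j => bern (p i) j - pois (p i) j) k := by
      intro k
      rw [f_insert μ I p hmeas hval hindep hp hi k, hsum_ins]
      have hpois : pois (p i + lam) k = conv (pois lam) (pois (p i)) k := by
        rw [conv_pois, add_comm]
      rw [hpois]
      rw [conv_sub (fun j => fs j) (pois lam) (bern (p i)) (pois (p i)) k]
      congr 1
      rw [conv_comm]
    have hA : Summable fun k => |conv (bern (p i)) (fun j => fs j - pois lam j) k| :=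
      summable_abs_conv (bern_nonneg (hp0 i) (hp1 i)) (summable_bern (p i)) habss
    have hB : Summable fun k => |conv (pois lam) (fun j => bern (p i) j - pois (p i) j) k| :=
      summable_abs_conv (pois_nonneg hlam0) (hasSum_pois hlam0).summable habsb
    calc ∑' k, |(μ {ω | (∑ l ∈ insert i s, I l ω) = k}).toReal
            - pois (∑ j ∈ insert i s, p j) k|
        ≤ ∑' k, (|conv (bern (p i)) (fun j => fs j - pois lam j) k|
            + |conv (pois lam) (fun j => bern (p i) j - pois (p i) j) k|) := by
          apply Summable.tsum_le_tsum _ _ (hA.add hB)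
          · intro k
            rw [hdecomp k]
            exact abs_add_le _ _
          · apply Summable.of_nonneg_of_le (fun k => abs_nonneg _) _ (hA.add hB)
            intro k
            rw [hdecomp k]
            exact abs_add_le _ _
      _ = (∑' k, |conv (bern (p i)) (fun j => fs j - pois lam j) k|)
            + ∑' k, |conv (pois lam) (fun j => bern (p i) j - pois (p i) j) k| :=
          Summable.tsum_add hA hB
      _ ≤ (∑' k, bern (p i) k) * (∑' k, |fs k - pois lam k|)
            + (∑' k, pois lam k) * (∑' k, |bern (p i) k - pois (p i) k|) := by
          gcongr
          · exact tsum_abs_conv_le (bern_nonneg (hp0 i) (hp1 i)) (summable_bern (p i)) habss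
          · exact tsum_abs_conv_le (pois_nonneg hlam0) (hasSum_pois hlam0).summable habsb
      _ ≤ 1 * (2 * ∑ j ∈ s, p j ^ 2) + 1 * (2 * p i ^ 2) := by
          rw [tsum_bern, (hasSum_pois hlam0).tsum_eq]
          gcongr
          exact tsum_abs_bern_sub_pois (hp0 i)
      _ = 2 * ∑ j ∈ insert i s, p j ^ 2 := by
          rw [Finset.sum_insert hi]
          ring

end Prob

end LeCamAux

open LeCamAux in
/-- LeCam's lemma: the total variation distance between the law of a sum of independent
Bernoulli indicators and the Poisson law with matching mean is at most `∑ pᵢ²`. -/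
theorem leCam_lemma {Ω : Type*} [MeasurableSpace Ω] (μ : Measure Ω) [IsProbabilityMeasure μ]
    (n : ℕ) (I : Fin n → Ω → ℕ) (p : Fin n → ℝ)
    (hmeas : ∀ i, Measurable (I i))
    (hval : ∀ i ω, I i ω ≤ 1)
    (hindep : iIndepFun I μ)
    (hp : ∀ i, (μ {ω | I i ω = 1}).toReal = p i) :
    (1 / 2) * ∑' k : ℕ,
        |(μ {ω | (∑ i, I i ω) = k}).toReal -
          Real.exp (-(∑ i, p i)) * (∑ i, p i) ^ k / (Nat.factorial k)|
      ≤ ∑ i, (p i) ^ 2 := by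
  have h := main_aux μ I p hmeas hval hindep hp Finset.univ
  have heq : ∀ k : ℕ, pois (∑ i, p i) k
      = Real.exp (-(∑ i, p i)) * (∑ i, p i) ^ k / (Nat.factorial k) := fun k => rfl
  simp only [heq] at h
  linarith
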